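/- Let ℓ : ℝ^{d×d'} → ℝ be differentiable, N ≥ 2 an integer, and let W : I → ℝ^{d×d'}, U : I → ℝ^{d×k}, σ : I → ℝ^k, V : I → ℝ^{d'×k} (k := min(d, d')) be a differentiable SVD path on an open interval I. Suppose the product matrix obeys the deep-factorization gradient-flow dynamics: for every t ∈ I, W′(t) = −T_N(U(t), σ(t), V(t), ∇ℓ(W(t))). Then for every t ∈ I and every r, the signed singular values evolve by σ_r′(t) = −N · (σ_r(t)²)^{1−1/N} · u_r(t)ᵀ · ∇ℓ(W(t)) · v_r(t). -/

import Mathlib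

open Matrix

/-- `dpow σ β` is the `k×k` diagonal matrix with `r`-th diagonal entry `(σᵣ²)^β`
(real power, with the convention `x⁰ = 1`). -/
noncomputable def dpow {k : ℕ} (σ : Fin k → ℝ) (β : ℝ) : Matrix (Fin k) (Fin k) ℝ :=
  Matrix.diagonal (fun r => (σ r ^ 2) ^ β)

/-- `TN N U σ V M` is the right-hand side of the gradient-flow dynamics of the product
matrix of a depth-`N` matrix factorization with balanced initialization, expressed
through a singular value decomposition `W = U·diag(σ)·Vᵀ`. -/
noncomputable def TN {d d' k : ℕ} (N : ℕ) (U : Matrix (Fin d) (Fin k) ℝ)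
    (σ : Fin k → ℝ) (V : Matrix (Fin d') (Fin k) ℝ) (M : Matrix (Fin d) (Fin d') ℝ) :
    Matrix (Fin d) (Fin d') ℝ :=
  M * V * dpow σ (((N : ℝ) - 1) / N) * Vᵀ +
  (∑ j ∈ Finset.Icc 2 (N - 1),
    U * dpow σ (((j : ℝ) - 1) / N) * Uᵀ * M * V * dpow σ (((N : ℝ) - (j : ℝ)) / N) * Vᵀ) +
  U * dpow σ (((N : ℝ) - 1) / N) * Uᵀ * M

/-- If each entry of `F` is differentiable and `Fᵀ F = 1` on an open set, then
`∑ p, F t p r * F' t p r = 0` for `t` in that set. -/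
lemma orth_deriv {n m : ℕ} {I : Set ℝ} (hI : IsOpen I)
    (F F' : ℝ → Matrix (Fin n) (Fin m) ℝ)
    (hF : ∀ t ∈ I, ∀ p q, HasDerivAt (fun s => F s p q) (F' t p q) t)
    (horth : ∀ t ∈ I, (F t)ᵀ * F t = 1) {t : ℝ} (ht : t ∈ I) (r : Fin m) :
    ∑ p, F t p r * F' t p r = 0 := by
  have h1 : HasDerivAt (fun s => ∑ p, F s p r * F s p r)
      (∑ p, (F' t p r * F t p r + F t p r * F' t p r)) t :=
    HasDerivAt.fun_sum fun p _ => (hF t ht p r).mul (hF t ht p r)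
  have h2 : (fun s => ∑ p, F s p r * F s p r) =ᶠ[nhds t] fun _ => (1 : ℝ) := by
    filter_upwards [hI.mem_nhds ht] with s hs
    have := congrArg (fun M => M r r) (horth s hs)
    simpa [Matrix.mul_apply, Matrix.transpose_apply] using this
  have h3 : HasDerivAt (fun s => ∑ p, F s p r * F s p r) 0 t :=
    (hasDerivAt_const t (1 : ℝ)).congr_of_eventuallyEq h2
  have h4 := h1.unique h3
  have h5 : (2 : ℝ) * ∑ p, F t p r * F' t p r = 0 := by
    rw [Finset.mul_sum, ← h4]
    apply Finset.sum_congr rfl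
    intro p _
    ring
  linarith

theorem stmt10 {d d' : ℕ} (N : ℕ) (hN : 2 ≤ N)
    (ℓ : Matrix (Fin d) (Fin d') ℝ → ℝ)
    (gradℓ : Matrix (Fin d) (Fin d') ℝ → Matrix (Fin d) (Fin d') ℝ)
    (hgrad : ∀ Wm H, HasDerivAt (fun s : ℝ => ℓ (Wm + s • H))
      (((gradℓ Wm)ᵀ * H).trace) 0)
    (I : Set ℝ) (hI_open : IsOpen I) (hI_conn : I.OrdConnected)
    (W W' : ℝ → Matrix (Fin d) (Fin d') ℝ)
    (U U' : ℝ → Matrix (Fin d) (Fin (min d d')) ℝ)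
    (σ σ' : ℝ → Fin (min d d') → ℝ)
    (V V' : ℝ → Matrix (Fin d') (Fin (min d d')) ℝ)
    (hW : ∀ t ∈ I, ∀ p q, HasDerivAt (fun s => W s p q) (W' t p q) t)
    (hU : ∀ t ∈ I, ∀ p q, HasDerivAt (fun s => U s p q) (U' t p q) t)
    (hσ : ∀ t ∈ I, ∀ r, HasDerivAt (fun s => σ s r) (σ' t r) t)
    (hV : ∀ t ∈ I, ∀ p q, HasDerivAt (fun s => V s p q) (V' t p q) t)
    (hSVD : ∀ t ∈ I, W t = U t * Matrix.diagonal (σ t) * (V t)ᵀ)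
    (hUorth : ∀ t ∈ I, (U t)ᵀ * U t = 1)
    (hVorth : ∀ t ∈ I, (V t)ᵀ * V t = 1)
    (hdyn : ∀ t ∈ I, W' t = -TN N (U t) (σ t) (V t) (gradℓ (W t))) :
    ∀ t ∈ I, ∀ r, σ' t r =
      -(N : ℝ) * (σ t r ^ 2) ^ (1 - 1 / (N : ℝ)) *
        ((U t)ᵀ * gradℓ (W t) * V t) r r := by
  intro t ht r
  have hN0 : (0 : ℝ) < (N : ℝ) := by
    have : 0 < N := lt_of_lt_of_le (by norm_num) hN
    exact_mod_cast this
  -- derivative of Uᵀ U = 1 and Vᵀ V = 1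
  have hUU' : ∑ p, U t p r * U' t p r = 0 := orth_deriv hI_open U U' hU hUorth ht r
  have hVV' : ∑ p, V t p r * V' t p r = 0 := orth_deriv hI_open V V' hV hVorth ht r
  -- product rule for W
  have hW'eq : W' t = U' t * Matrix.diagonal (σ t) * (V t)ᵀ
      + U t * Matrix.diagonal (σ' t) * (V t)ᵀ
      + U t * Matrix.diagonal (σ t) * (V' t)ᵀ := by
    funext p q
    have hentry : ∀ (A : Matrix (Fin d) (Fin (min d d')) ℝ) (s : Fin (min d d') → ℝ)
        (B : Matrix (Fin d') (Fin (min d d')) ℝ),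
        (A * Matrix.diagonal s * Bᵀ) p q = ∑ j, A p j * s j * B q j := by
      intro A s B
      rw [Matrix.mul_apply]
      simp only [Matrix.mul_diagonal, Matrix.transpose_apply]
    have h1 : HasDerivAt (fun s => ∑ j, U s p j * σ s j * V s q j)
        (∑ j, ((U' t p j * σ t j + U t p j * σ' t j) * V t q j
          + U t p j * σ t j * V' t q j)) t :=
      HasDerivAt.fun_sum fun j _ =>
        (((hU t ht p j).mul (hσ t ht j)).mul (hV t ht q j))
    have h2 : (fun s => W s p q) =ᶠ[nhds t] (fun s => ∑ j, U s p j * σ s j * V s q j) := by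
      filter_upwards [hI_open.mem_nhds ht] with s hs
      rw [hSVD s hs, hentry]
    have h3 : HasDerivAt (fun s => W s p q)
        (∑ j, ((U' t p j * σ t j + U t p j * σ' t j) * V t q j
          + U t p j * σ t j * V' t q j)) t := h1.congr_of_eventuallyEq h2
    have h4 := (hW t ht p q).unique h3
    rw [h4]
    simp only [Matrix.add_apply, hentry]
    rw [← Finset.sum_add_distrib, ← Finset.sum_add_distrib]
    apply Finset.sum_congr rfl
    intro j _
    ring
  -- hence σ' t r = (Uᵀ W' V) r r
  have hUX : ∀ (n : ℕ) (X : Matrix (Fin (min d d')) (Fin n) ℝ), (U t)ᵀ * (U t * X) = X := by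
    intro n X; rw [← Matrix.mul_assoc, hUorth t ht, Matrix.one_mul]
  have hXV : ∀ (n : ℕ) (X : Matrix (Fin n) (Fin (min d d')) ℝ), X * (V t)ᵀ * V t = X := by
    intro n X; rw [Matrix.mul_assoc, hVorth t ht, Matrix.mul_one]
  have hkey : ((U t)ᵀ * W' t * V t) r r = σ' t r := by
    rw [hW'eq]
    have e1 : (U t)ᵀ * (U' t * Matrix.diagonal (σ t) * (V t)ᵀ
      + U t * Matrix.diagonal (σ' t) * (V t)ᵀ
      + U t * Matrix.diagonal (σ t) * (V' t)ᵀ) * V t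
      = (U t)ᵀ * U' t * Matrix.diagonal (σ t)
        + Matrix.diagonal (σ' t)
        + Matrix.diagonal (σ t) * ((V' t)ᵀ * V t) := by
      rw [Matrix.mul_add, Matrix.mul_add, Matrix.add_mul, Matrix.add_mul]
      congr 1
      · congr 1
        · calc (U t)ᵀ * (U' t * Matrix.diagonal (σ t) * (V t)ᵀ) * V t
              = (U t)ᵀ * (U' t * Matrix.diagonal (σ t)) * (V t)ᵀ * V t := by
                simp only [Matrix.mul_assoc]
            _ = (U t)ᵀ * (U' t * Matrix.diagonal (σ t)) := hXV _ _
            _ = (U t)ᵀ * U' t * Matrix.diagonal (σ t) := by rw [Matrix.mul_assoc]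
        · calc (U t)ᵀ * (U t * Matrix.diagonal (σ' t) * (V t)ᵀ) * V t
              = (U t)ᵀ * (U t * (Matrix.diagonal (σ' t) * (V t)ᵀ)) * V t := by
                simp only [Matrix.mul_assoc]
            _ = Matrix.diagonal (σ' t) * (V t)ᵀ * V t := by rw [hUX]
            _ = Matrix.diagonal (σ' t) := hXV _ _
      · calc (U t)ᵀ * (U t * Matrix.diagonal (σ t) * (V' t)ᵀ) * V t
            = (U t)ᵀ * (U t * (Matrix.diagonal (σ t) * (V' t)ᵀ)) * V t := by
              simp only [Matrix.mul_assoc]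
          _ = Matrix.diagonal (σ t) * (V' t)ᵀ * V t := by rw [hUX]
          _ = Matrix.diagonal (σ t) * ((V' t)ᵀ * V t) := by rw [Matrix.mul_assoc]
    rw [e1]
    have eU : ((U t)ᵀ * U' t * Matrix.diagonal (σ t)) r r = 0 := by
      rw [Matrix.mul_diagonal]
      have : ((U t)ᵀ * U' t) r r = 0 := by
        simpa [Matrix.mul_apply, Matrix.transpose_apply] using hUU'
      rw [this, zero_mul]
    have eV : (Matrix.diagonal (σ t) * ((V' t)ᵀ * V t)) r r = 0 := by
      rw [Matrix.diagonal_mul]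
      have h0 : ((V' t)ᵀ * V t) r r = 0 := by
        have h1 : ∑ p, V' t p r * V t p r = 0 := by
          rw [← hVV']; apply Finset.sum_congr rfl; intro p _; ring
        simpa [Matrix.mul_apply, Matrix.transpose_apply] using h1
      rw [h0, mul_zero]
    simp [eU, eV, Matrix.diagonal_apply_eq]
  -- now compute (Uᵀ TN V) r r
  set M := gradℓ (W t) with hM
  set A := (U t)ᵀ * M * V t with hA
  have hexp : ((N : ℝ) - 1) / N = 1 - 1 / (N : ℝ) := by
    field_simp
  have hexp0 : ((N : ℝ) - 1) / N ≠ 0 := by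
    apply div_ne_zero _ (ne_of_gt hN0)
    have : (2 : ℝ) ≤ (N : ℝ) := by exact_mod_cast hN
    linarith
  set c : ℝ := (σ t r ^ 2) ^ (((N : ℝ) - 1) / N) with hc
  have hTN : ((U t)ᵀ * TN N (U t) (σ t) (V t) M * V t) r r = (N : ℝ) * c * A r r := by
    have e1 : (U t)ᵀ * (M * V t * dpow (σ t) (((N : ℝ) - 1) / N) * (V t)ᵀ) * V t
        = A * dpow (σ t) (((N : ℝ) - 1) / N) := by
      calc (U t)ᵀ * (M * V t * dpow (σ t) (((N : ℝ) - 1) / N) * (V t)ᵀ) * V t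
          = (U t)ᵀ * (M * V t * dpow (σ t) (((N : ℝ) - 1) / N)) * (V t)ᵀ * V t := by
            simp only [Matrix.mul_assoc]
        _ = (U t)ᵀ * (M * V t * dpow (σ t) (((N : ℝ) - 1) / N)) := hXV _ _
        _ = A * dpow (σ t) (((N : ℝ) - 1) / N) := by
            rw [hA]; simp only [Matrix.mul_assoc]
    have e3 : (U t)ᵀ * (U t * dpow (σ t) (((N : ℝ) - 1) / N) * (U t)ᵀ * M) * V t
        = dpow (σ t) (((N : ℝ) - 1) / N) * A := by
      calc (U t)ᵀ * (U t * dpow (σ t) (((N : ℝ) - 1) / N) * (U t)ᵀ * M) * V t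
          = (U t)ᵀ * (U t * (dpow (σ t) (((N : ℝ) - 1) / N) * ((U t)ᵀ * M))) * V t := by
            simp only [Matrix.mul_assoc]
        _ = dpow (σ t) (((N : ℝ) - 1) / N) * ((U t)ᵀ * M) * V t := by rw [hUX]
        _ = dpow (σ t) (((N : ℝ) - 1) / N) * A := by rw [hA]; simp only [Matrix.mul_assoc]
    have e2 : ∀ j : ℕ, (U t)ᵀ * (U t * dpow (σ t) (((j : ℝ) - 1) / N) * (U t)ᵀ * M * V t
          * dpow (σ t) (((N : ℝ) - (j : ℝ)) / N) * (V t)ᵀ) * V t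
        = dpow (σ t) (((j : ℝ) - 1) / N) * (A * dpow (σ t) (((N : ℝ) - (j : ℝ)) / N)) := by
      intro j
      calc (U t)ᵀ * (U t * dpow (σ t) (((j : ℝ) - 1) / N) * (U t)ᵀ * M * V t
            * dpow (σ t) (((N : ℝ) - (j : ℝ)) / N) * (V t)ᵀ) * V t
          = (U t)ᵀ * (U t * (dpow (σ t) (((j : ℝ) - 1) / N) * ((U t)ᵀ * (M * (V t
            * dpow (σ t) (((N : ℝ) - (j : ℝ)) / N)))))) * (V t)ᵀ * V t := by
            simp only [Matrix.mul_assoc]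
        _ = (U t)ᵀ * (U t * (dpow (σ t) (((j : ℝ) - 1) / N) * ((U t)ᵀ * (M * (V t
            * dpow (σ t) (((N : ℝ) - (j : ℝ)) / N)))))) := hXV _ _
        _ = dpow (σ t) (((j : ℝ) - 1) / N) * ((U t)ᵀ * (M * (V t
            * dpow (σ t) (((N : ℝ) - (j : ℝ)) / N)))) := by rw [hUX]
        _ = dpow (σ t) (((j : ℝ) - 1) / N) * (A * dpow (σ t) (((N : ℝ) - (j : ℝ)) / N)) := by
            rw [hA]; simp only [Matrix.mul_assoc]
    have expand : (U t)ᵀ * TN N (U t) (σ t) (V t) M * V t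
        = A * dpow (σ t) (((N : ℝ) - 1) / N)
          + (∑ j ∈ Finset.Icc 2 (N - 1),
              dpow (σ t) (((j : ℝ) - 1) / N) * (A * dpow (σ t) (((N : ℝ) - (j : ℝ)) / N)))
          + dpow (σ t) (((N : ℝ) - 1) / N) * A := by
      rw [TN, Matrix.mul_add, Matrix.mul_add, Matrix.add_mul, Matrix.add_mul,
        Matrix.mul_sum, Matrix.sum_mul]
      rw [e1, e3]
      congr 1
      congr 1
      apply Finset.sum_congr rfl
      intro j _
      exact e2 j
    rw [expand]
    -- entries
    have en1 : (A * dpow (σ t) (((N : ℝ) - 1) / N)) r r = A r r * c := by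
      rw [dpow, Matrix.mul_diagonal]
    have en3 : (dpow (σ t) (((N : ℝ) - 1) / N) * A) r r = c * A r r := by
      rw [dpow, Matrix.diagonal_mul]
    have en2 : ∀ j ∈ Finset.Icc 2 (N - 1),
        (dpow (σ t) (((j : ℝ) - 1) / N) * (A * dpow (σ t) (((N : ℝ) - (j : ℝ)) / N))) r r
        = c * A r r := by
      intro j hj
      rw [dpow, dpow, Matrix.diagonal_mul, Matrix.mul_diagonal]
      have hsum : (((j : ℝ) - 1) / N) + (((N : ℝ) - (j : ℝ)) / N) = ((N : ℝ) - 1) / N := by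
        rw [← add_div]; ring_nf
      have : c = (σ t r ^ 2) ^ (((j : ℝ) - 1) / N) * (σ t r ^ 2) ^ (((N : ℝ) - (j : ℝ)) / N) := by
        rw [hc, ← hsum]
        exact Real.rpow_add' (sq_nonneg _) (by rw [hsum]; exact hexp0)
      rw [this]; ring
    rw [Matrix.add_apply, Matrix.add_apply, Matrix.sum_apply, en1, en3,
      Finset.sum_congr rfl en2, Finset.sum_const, Nat.card_Icc]
    have hcard : ((N - 1 + 1 - 2 : ℕ) : ℝ) = (N : ℝ) - 2 := by
      have h1 : N - 1 + 1 - 2 = N - 2 := by omega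
      rw [h1, Nat.cast_sub hN]; norm_num
    rw [nsmul_eq_mul, hcard]
    ring
  -- conclude
  have hdynt := hdyn t ht
  rw [← hM] at hdynt
  have : σ' t r = -((N : ℝ) * c * A r r) := by
    rw [← hkey, hdynt, Matrix.mul_neg, Matrix.neg_mul, Matrix.neg_apply, hTN]
  rw [this, hc, hexp]
  ring
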